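/- Let d ≥ 1 and 0 < α < 1. Let u : ℝ^d → ℝ^d be continuously differentiable and divergence-free with A := sup_x ‖Du(x)‖ < ∞ (operator norm of the derivative). Let F : ℝ^d → ℝ be continuously differentiable and bounded, with bounded gradient and finite Hölder seminorm [F]_α. Let K : ℝ^d → ℝ be a Schwartz function. Define C(x) := ∫_{ℝ^d} (u(x−h) − u(x)) · (∇F)(x−h) K(h) dh. Then both of the following hold: sup_x |C(x)| ≤ A · [F]_α · ∫_{ℝ^d} |h|^{1+α} |∇K(h)| dh, and sup_x |C(x)| ≤ A · (sup_x |F(x)|) · ∫_{ℝ^d} |h| |∇K(h)| dh. -/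

import Mathlib

open MeasureTheory Filter Topology Set

theorem div_integral_zero_pi (n : ℕ)
    (f : Fin (n+1) → (Fin (n+1) → ℝ) → ℝ)
    (f' : Fin (n+1) → (Fin (n+1) → ℝ) → ((Fin (n+1) → ℝ) →L[ℝ] ℝ))
    (Hd : ∀ x i, HasFDerivAt (f i) (f' i x) x)
    (Hcont : Continuous fun x => ∑ i, f' i x (Pi.single i 1))
    (Hi : Integrable (fun x => ∑ i, f' i x (Pi.single i 1)))
    (C : ℝ) (hC : ∀ i x, |f i x| ≤ C / (1 + ‖x‖) ^ (n + 2)) :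
    ∫ x, ∑ i, f' i x (Pi.single i 1) = 0 := by
  have hC0 : 0 ≤ C := by
    have h := hC 0 0
    simp only [norm_zero, add_zero, one_pow, div_one] at h
    exact le_trans (abs_nonneg _) h
  set a : ℕ → (Fin (n+1) → ℝ) := fun m _ => -(m:ℝ) with ha
  set b : ℕ → (Fin (n+1) → ℝ) := fun m _ => (m:ℝ) with hb
  -- the box integrals converge to the total integral
  have hsm : ∀ m : ℕ, MeasurableSet (Icc (a m) (b m)) := fun m => measurableSet_Icc
  have hmono : Monotone fun m : ℕ => Icc (a m) (b m) := by
    intro m m' hmm'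
    apply Icc_subset_Icc
    · intro i; simp only [ha]; exact neg_le_neg (by exact_mod_cast hmm')
    · intro i; simp only [hb]; exact_mod_cast hmm'
  have hunion : (⋃ m : ℕ, Icc (a m) (b m)) = univ := by
    ext x
    simp only [mem_iUnion, mem_univ, iff_true]
    obtain ⟨m, hm⟩ := exists_nat_ge ‖x‖
    refine ⟨m, fun i => ?_, fun i => ?_⟩
    · have := norm_le_pi_norm x i
      simp only [Real.norm_eq_abs] at this
      simp only [ha]
      linarith [abs_le.1 (this.trans hm) |>.1]
    · have := norm_le_pi_norm x i
      simp only [Real.norm_eq_abs] at this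
      simp only [hb]
      linarith [abs_le.1 (this.trans hm) |>.2]
  have T : Tendsto (fun m : ℕ => ∫ x in Icc (a m) (b m), ∑ i, f' i x (Pi.single i 1))
      atTop (𝓝 (∫ x, ∑ i, f' i x (Pi.single i 1))) := by
    have := tendsto_setIntegral_of_monotone hsm hmono (by rw [hunion]; exact Hi.integrableOn)
    rwa [hunion, setIntegral_univ] at this
  -- each box integral equals the sum of face terms
  have key : ∀ m : ℕ, ∫ x in Icc (a m) (b m), ∑ i, f' i x (Pi.single i 1) =
      ∑ i : Fin (n+1),
        ((∫ x in Icc (a m ∘ i.succAbove) (b m ∘ i.succAbove), f i (i.insertNth (b m i) x)) -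
         ∫ x in Icc (a m ∘ i.succAbove) (b m ∘ i.succAbove), f i (i.insertNth (a m i) x)) := by
    intro m
    refine integral_divergence_of_hasFDerivAt_off_countable' (a m) (b m)
      (fun i => neg_le_self (by positivity)) f f' ∅ countable_empty
      (fun i => ((continuous_iff_continuousAt.2 fun x => (Hd x i).continuousAt).continuousOn))
      (fun x _ i => Hd x i) (Hcont.continuousOn.integrableOn_compact isCompact_Icc)
  -- bound on faces
  have face_bound : ∀ (m : ℕ) (i : Fin (n+1)) (c : ℝ), |c| = (m:ℝ) →
      ‖∫ x in Icc (a m ∘ i.succAbove) (b m ∘ i.succAbove), f i (i.insertNth c x)‖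
        ≤ C / (1 + (m:ℝ)) ^ (n + 2) * (2*(m:ℝ))^n := by
    intro m i c hc
    have hvol : volume (Icc (a m ∘ i.succAbove) (b m ∘ i.succAbove))
        = ENNReal.ofReal ((2*(m:ℝ))^n) := by
      rw [Real.volume_Icc_pi]
      simp only [Function.comp, ha, hb, sub_neg_eq_add]
      rw [Finset.prod_const, ← ENNReal.ofReal_pow (by positivity)]
      norm_num [Finset.card_univ]
      ring_nf
      rw [ENNReal.ofReal_mul (by positivity)]
      simp [mul_pow]
    have hb1 : ∀ x ∈ Icc (a m ∘ i.succAbove) (b m ∘ i.succAbove),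
        ‖f i (i.insertNth c x)‖ ≤ C / (1 + (m:ℝ)) ^ (n + 2) := by
      intro x _
      have h1 : (m:ℝ) ≤ ‖(i.insertNth c x : Fin (n+1) → ℝ)‖ := by
        have h2 : ‖(i.insertNth c x : Fin (n+1) → ℝ) i‖ ≤ ‖(i.insertNth c x : Fin (n+1) → ℝ)‖ :=
          norm_le_pi_norm _ i
        rw [Fin.insertNth_apply_same] at h2
        simpa [Real.norm_eq_abs, hc] using h2
      calc ‖f i (i.insertNth c x)‖
          ≤ C / (1 + ‖(i.insertNth c x : Fin (n+1) → ℝ)‖) ^ (n + 2) := hC i _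
      _ ≤ C / (1 + (m:ℝ)) ^ (n + 2) := by gcongr
    have h3 := norm_setIntegral_le_of_norm_le_const
      (by rw [hvol]; exact ENNReal.ofReal_lt_top) hb1
    rwa [measureReal_def, hvol, ENNReal.toReal_ofReal (by positivity)] at h3
  have T0 : Tendsto (fun m : ℕ => ∫ x in Icc (a m) (b m), ∑ i, f' i x (Pi.single i 1))
      atTop (𝓝 0) := by
    refine squeeze_zero_norm' ?_
      (tendsto_const_div_atTop_nhds_zero_nat (((n:ℝ)+1) * (2 * (C * 2^n))))
    · filter_upwards [eventually_ge_atTop 1] with m hm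
      rw [key m]
      have hm1 : (1:ℝ) ≤ (m:ℝ) := by exact_mod_cast hm
      have hface : ∀ (i : Fin (n+1)) (c : ℝ), |c| = (m:ℝ) →
          ‖∫ x in Icc (a m ∘ i.succAbove) (b m ∘ i.succAbove), f i (i.insertNth c x)‖
            ≤ C * 2^n / (m:ℝ) := by
        intro i c hc
        refine (face_bound m i c hc).trans ?_
        rw [div_mul_eq_mul_div, div_le_div_iff₀ (by positivity) (by positivity)]
        calc C * (2*(m:ℝ))^n * (m:ℝ) = (C * 2^n) * ((m:ℝ)^n * (m:ℝ)) := by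
              rw [mul_pow]; ring
        _ = (C * 2^n) * (m:ℝ)^(n+1) := by rw [pow_succ]
        _ ≤ (C * 2^n) * (1+(m:ℝ))^(n+2) := by
            apply mul_le_mul_of_nonneg_left _ (by positivity)
            calc (m:ℝ)^(n+1) ≤ (1+(m:ℝ))^(n+1) :=
                  pow_le_pow_left₀ (by positivity) (by linarith) _
            _ ≤ (1+(m:ℝ))^(n+2) := pow_le_pow_right₀ (by linarith) (by omega)
      calc ‖∑ i : Fin (n+1),
            ((∫ x in Icc (a m ∘ i.succAbove) (b m ∘ i.succAbove), f i (i.insertNth (b m i) x)) -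
             ∫ x in Icc (a m ∘ i.succAbove) (b m ∘ i.succAbove), f i (i.insertNth (a m i) x))‖
          ≤ ∑ i : Fin (n+1), (C * 2^n / (m:ℝ) + C * 2^n / (m:ℝ)) := by
            refine (norm_sum_le _ _).trans (Finset.sum_le_sum fun i _ => ?_)
            refine (norm_sub_le _ _).trans (add_le_add ?_ ?_)
            · exact hface i (b m i) (by simp [hb])
            · exact hface i (a m i) (by simp [ha])
      _ = (((n:ℝ)+1) * (2 * (C * 2^n))) / (m:ℝ) := by
            rw [Finset.sum_const, Finset.card_univ]
            simp [Fintype.card_fin]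
            ring
  exact tendsto_nhds_unique T T0

theorem euc_coord_le {k : ℕ} (x : EuclideanSpace ℝ (Fin k)) (i : Fin k) : |x i| ≤ ‖x‖ := by
  rw [EuclideanSpace.norm_eq]
  calc |x i| = Real.sqrt (‖x i‖ ^ 2) := by
        rw [Real.norm_eq_abs, Real.sqrt_sq_eq_abs, abs_abs]
  _ ≤ Real.sqrt (∑ j, ‖x j‖ ^ 2) :=
      Real.sqrt_le_sqrt (Finset.single_le_sum (f := fun j => ‖x j‖ ^ 2)
        (fun j _ => by positivity) (Finset.mem_univ i))

theorem div_integral_zero_euc (d : ℕ) (hd : 1 ≤ d)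
    (f : Fin d → EuclideanSpace ℝ (Fin d) → ℝ)
    (f' : Fin d → EuclideanSpace ℝ (Fin d) → (EuclideanSpace ℝ (Fin d) →L[ℝ] ℝ))
    (Hd : ∀ x i, HasFDerivAt (f i) (f' i x) x)
    (Hcont : Continuous fun x => ∑ i, f' i x (EuclideanSpace.single i 1))
    (Hi : Integrable (fun x => ∑ i, f' i x (EuclideanSpace.single i 1)))
    (C : ℝ) (hC : ∀ i x, |f i x| ≤ C / (1 + ‖x‖) ^ (d + 1)) :
    ∫ x, ∑ i, f' i x (EuclideanSpace.single i 1) = 0 := by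
  obtain ⟨n, rfl⟩ : ∃ n, d = n + 1 := ⟨d - 1, by omega⟩
  have hC0 : 0 ≤ C := by
    have h := hC ⟨0, by omega⟩ 0
    simp only [norm_zero, add_zero, one_pow, div_one] at h
    exact le_trans (abs_nonneg _) h
  set e := EuclideanSpace.equiv (Fin (n+1)) ℝ with he
  have hsingle : ∀ i : Fin (n+1), e.symm (Pi.single i 1) = EuclideanSpace.single i (1:ℝ) :=
    fun i => rfl
  set ψ := (MeasurableEquiv.toLp 2 (Fin (n+1) → ℝ)).symm with hψ
  have hψe : ∀ y : Fin (n+1) → ℝ, ψ.symm y = e.symm y := fun _ => rfl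
  have hMP : MeasurePreserving ψ.symm volume volume :=
    (EuclideanSpace.volume_preserving_symm_measurableEquiv_toLp _).symm
  set G : EuclideanSpace ℝ (Fin (n+1)) → ℝ :=
    fun x => ∑ i, f' i x (EuclideanSpace.single i 1) with hG
  have htrans : ∫ y : Fin (n+1) → ℝ, G (ψ.symm y) = ∫ x, G x :=
    hMP.integral_comp ψ.symm.measurableEmbedding G
  rw [← htrans]
  -- now apply the pi-space lemma
  have := div_integral_zero_pi n (fun i y => f i (e.symm y))
    (fun i y => (f' i (e.symm y)).comp (e.symm : (Fin (n+1) → ℝ) →L[ℝ] EuclideanSpace ℝ (Fin (n+1))))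
    (fun y i => HasFDerivAt.comp y (Hd (e.symm y) i) (e.symm.hasFDerivAt))
    (by
      have : (fun y : Fin (n+1) → ℝ => ∑ i, ((f' i (e.symm y)).comp
          (e.symm : (Fin (n+1) → ℝ) →L[ℝ] EuclideanSpace ℝ (Fin (n+1)))) (Pi.single i 1))
          = fun y => G (e.symm y) := by
        funext y
        simp only [ContinuousLinearMap.comp_apply, ContinuousLinearEquiv.coe_coe, hsingle, hG]
      rw [this]
      exact Hcont.comp e.symm.continuous)
    (by
      have : (fun y : Fin (n+1) → ℝ => ∑ i, ((f' i (e.symm y)).comp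
          (e.symm : (Fin (n+1) → ℝ) →L[ℝ] EuclideanSpace ℝ (Fin (n+1)))) (Pi.single i 1))
          = G ∘ ψ.symm := by
        funext y
        simp only [Function.comp, ContinuousLinearMap.comp_apply,
          ContinuousLinearEquiv.coe_coe, hsingle, hG, hψe]
      rw [this]
      exact (hMP.integrable_comp_emb ψ.symm.measurableEmbedding).2 Hi)
    C
    (by
      intro i y
      refine (hC i (e.symm y)).trans ?_
      have hy : ‖y‖ ≤ ‖e.symm y‖ := by
        refine (pi_norm_le_iff_of_nonneg (norm_nonneg _)).2 fun j => ?_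
        have : (e.symm y) j = y j := rfl
        rw [Real.norm_eq_abs, ← this]
        exact euc_coord_le (e.symm y) j
      gcongr)
  have heq : (fun y : Fin (n+1) → ℝ => ∑ i, ((f' i (e.symm y)).comp
      (e.symm : (Fin (n+1) → ℝ) →L[ℝ] EuclideanSpace ℝ (Fin (n+1)))) (Pi.single i 1))
      = fun y => G (ψ.symm y) := by
    funext y
    simp only [ContinuousLinearMap.comp_apply, ContinuousLinearEquiv.coe_coe, hsingle, hG, hψe]
  rw [heq] at this
  exact this

theorem euc_sum_single {k : ℕ} (v : EuclideanSpace ℝ (Fin k)) :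
    ∑ i, v i • EuclideanSpace.single i (1:ℝ) = v := by
  ext j
  show (EuclideanSpace.proj (𝕜 := ℝ) j) (∑ i, v i • EuclideanSpace.single i (1:ℝ)) = v j
  rw [map_sum]
  simp [EuclideanSpace.single_apply]

theorem div_form_integral_zero (d : ℕ) (hd : 1 ≤ d)
    (g : EuclideanSpace ℝ (Fin d) → ℝ)
    (w : EuclideanSpace ℝ (Fin d) → EuclideanSpace ℝ (Fin d))
    (g' : EuclideanSpace ℝ (Fin d) → (EuclideanSpace ℝ (Fin d) →L[ℝ] ℝ))
    (w' : EuclideanSpace ℝ (Fin d) → (EuclideanSpace ℝ (Fin d) →L[ℝ] EuclideanSpace ℝ (Fin d)))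
    (hg : ∀ x, HasFDerivAt g (g' x) x) (hw : ∀ x, HasFDerivAt w (w' x) x)
    (hg'c : Continuous fun x => g' x (w x))
    (hdivw : ∀ x, ∑ i, w' x (EuclideanSpace.single i 1) i = 0)
    (hint : Integrable (fun x => g' x (w x)))
    (C : ℝ) (hC : ∀ x, |g x| * ‖w x‖ ≤ C / (1 + ‖x‖) ^ (d + 1)) :
    ∫ x, g' x (w x) = 0 := by
  set f : Fin d → EuclideanSpace ℝ (Fin d) → ℝ := fun i x => g x * w x i with hf
  set f' : Fin d → EuclideanSpace ℝ (Fin d) → (EuclideanSpace ℝ (Fin d) →L[ℝ] ℝ) :=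
    fun i x => g x • ((EuclideanSpace.proj i).comp (w' x)) + (w x i) • g' x with hf'
  have Hd : ∀ x i, HasFDerivAt (f i) (f' i x) x := by
    intro x i
    exact (hg x).mul ((EuclideanSpace.proj (𝕜 := ℝ) i).hasFDerivAt.comp x (hw x))
  -- the divergence equals g' x (w x)
  have hdiveq : ∀ x, ∑ i, f' i x (EuclideanSpace.single i 1) = g' x (w x) := by
    intro x
    have h1 : ∀ i, f' i x (EuclideanSpace.single i 1)
        = g x * (w' x (EuclideanSpace.single i 1) i)
          + (w x i) * g' x (EuclideanSpace.single i 1) := by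
      intro i
      simp [hf', ContinuousLinearMap.add_apply, ContinuousLinearMap.smul_apply,
        ContinuousLinearMap.comp_apply, smul_eq_mul]
    rw [Finset.sum_congr rfl fun i _ => h1 i, Finset.sum_add_distrib, ← Finset.mul_sum,
      hdivw x, mul_zero, zero_add]
    have h2 : g' x (w x) = g' x (∑ i, w x i • EuclideanSpace.single i (1:ℝ)) := by
      rw [euc_sum_single]
    rw [h2, map_sum]
    simp [smul_eq_mul]
  have hfun : (fun x => ∑ i, f' i x (EuclideanSpace.single i 1)) = fun x => g' x (w x) :=
    funext hdiveq
  have := div_integral_zero_euc d hd f f' Hd (by rw [hfun]; exact hg'c)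
    (by rw [hfun]; exact hint) C
    (by
      intro i x
      have : |f i x| ≤ |g x| * ‖w x‖ := by
        rw [hf, abs_mul]
        exact mul_le_mul_of_nonneg_left (euc_coord_le (w x) i) (abs_nonneg _)
      exact this.trans (hC x))
  rwa [hfun] at this

set_option maxHeartbeats 1000000 in
theorem advective_convolution_commutator_estimate
    (d : ℕ) (hd : 1 ≤ d) (α : ℝ) (hα0 : 0 < α) (hα1 : α < 1)
    (u : EuclideanSpace ℝ (Fin d) → EuclideanSpace ℝ (Fin d))
    (hu : ContDiff ℝ 1 u)
    (hdiv : ∀ x, ∑ i : Fin d,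
      fderiv ℝ (fun y => u y i) x (EuclideanSpace.single i 1) = 0)
    (A : ℝ) (hA : ∀ x, ‖fderiv ℝ u x‖ ≤ A)
    (F : EuclideanSpace ℝ (Fin d) → ℝ) (hF : ContDiff ℝ 1 F)
    (MF : ℝ) (hMF : ∀ x, |F x| ≤ MF)
    (MG : ℝ) (hMG : ∀ x, ‖fderiv ℝ F x‖ ≤ MG)
    (Hα : ℝ) (hHα : ∀ x y, |F x - F y| ≤ Hα * ‖x - y‖ ^ α)
    (K : SchwartzMap (EuclideanSpace ℝ (Fin d)) ℝ) :
    (∀ x, |∫ h, fderiv ℝ F (x - h) (u (x - h) - u x) * K h| ≤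
        A * Hα * ∫ h, ‖h‖ ^ (1 + α) * ‖fderiv ℝ (⇑K) h‖) ∧
    (∀ x, |∫ h, fderiv ℝ F (x - h) (u (x - h) - u x) * K h| ≤
        A * MF * ∫ h, ‖h‖ * ‖fderiv ℝ (⇑K) h‖) := by
  have hud : Differentiable ℝ u := hu.differentiable one_ne_zero
  have hFd : Differentiable ℝ F := hF.differentiable one_ne_zero
  have hA0 : 0 ≤ A := le_trans (norm_nonneg _) (hA 0)
  have hMF0 : 0 ≤ MF := le_trans (abs_nonneg _) (hMF 0)
  set B : ℝ := 2 ^ (d+2) * ((Finset.Iic ((d+2), 0)).sup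
      (fun m => SchwartzMap.seminorm ℝ m.1 m.2)) K with hB
  have hKdecay : ∀ h : EuclideanSpace ℝ (Fin d), (1 + ‖h‖) ^ (d + 2) * ‖K h‖ ≤ B := by
    intro h
    have h1 := SchwartzMap.one_add_le_sup_seminorm_apply (𝕜 := ℝ) (m := (d+2, 0))
      le_rfl le_rfl K h
    simpa [norm_iteratedFDeriv_zero] using h1
  have hB0 : 0 ≤ B := le_trans (by positivity) (hKdecay 0)
  have hKder : ∀ h, HasFDerivAt (⇑K) (fderiv ℝ (⇑K) h) h :=
    fun h => (K.differentiable h).hasFDerivAt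
  have hK'cont : Continuous (fderiv ℝ (⇑K)) := (K.smooth 1).continuous_fderiv one_ne_zero
  have hF'cont : Continuous (fderiv ℝ F) := hF.continuous_fderiv one_ne_zero
  have hintK1 : Integrable (fun h => ‖h‖ * ‖fderiv ℝ (⇑K) h‖) := by
    simpa [SchwartzMap.fderivCLM_apply] using
      (SchwartzMap.fderivCLM ℝ _ _ K).integrable_pow_mul volume 1
  have hintK0 : Integrable (fun h => ‖fderiv ℝ (⇑K) h‖) := by
    simpa [SchwartzMap.fderivCLM_apply] using
      (SchwartzMap.fderivCLM ℝ _ _ K).integrable_pow_mul volume 0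
  have hintK2 : Integrable (fun h => ‖h‖^2 * ‖fderiv ℝ (⇑K) h‖) := by
    simpa [SchwartzMap.fderivCLM_apply] using
      (SchwartzMap.fderivCLM ℝ _ _ K).integrable_pow_mul volume 2
  have hintKK1 : Integrable (fun h => ‖h‖ * ‖K h‖) := by
    simpa using K.integrable_pow_mul volume 1
  have hrpow_cont : Continuous
      fun h : EuclideanSpace ℝ (Fin d) => ‖h‖ ^ (1+α) * ‖fderiv ℝ (⇑K) h‖ := by
    exact (continuous_norm.rpow_const (fun h => Or.inr (by linarith))).mul hK'cont.norm
  have hrint : Integrable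
      (fun h : EuclideanSpace ℝ (Fin d) => ‖h‖ ^ (1+α) * ‖fderiv ℝ (⇑K) h‖) := by
    refine Integrable.mono' (hintK0.add hintK2) hrpow_cont.aestronglyMeasurable ?_
    filter_upwards with h
    rw [Real.norm_eq_abs, abs_of_nonneg (by positivity)]
    simp only [Pi.add_apply]
    have hX : (0:ℝ) ≤ ‖fderiv ℝ (⇑K) h‖ := norm_nonneg _
    rcases le_total ‖h‖ 1 with hle | hle
    · have h1 : ‖h‖ ^ (1+α) ≤ 1 := Real.rpow_le_one (norm_nonneg _) hle (by linarith)
      have h2 := mul_le_mul_of_nonneg_right h1 hX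
      have h3 : (0:ℝ) ≤ ‖h‖^2 * ‖fderiv ℝ (⇑K) h‖ := by positivity
      linarith
    · have h1 : ‖h‖ ^ (1+α) ≤ ‖h‖ ^ (2:ℝ) :=
        Real.rpow_le_rpow_of_exponent_le hle (by linarith)
      have h15 : ‖h‖ ^ (2:ℝ) = ‖h‖^2 := by
        rw [show (2:ℝ) = ((2:ℕ):ℝ) by norm_num, Real.rpow_natCast]
      rw [h15] at h1
      have h2 := mul_le_mul_of_nonneg_right h1 hX
      linarith
  -- the per-point identities
  have main : ∀ x : EuclideanSpace ℝ (Fin d),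
      (∫ h, fderiv ℝ F (x - h) (u (x - h) - u x) * K h
        = ∫ h, F (x - h) * fderiv ℝ (⇑K) h (u (x - h) - u x))
      ∧ (∫ h, fderiv ℝ (⇑K) h (u (x - h) - u x)) = 0
      ∧ Integrable (fun h => F (x - h) * fderiv ℝ (⇑K) h (u (x - h) - u x))
      ∧ Integrable (fun h => fderiv ℝ (⇑K) h (u (x - h) - u x)) := by
    intro x
    set v : EuclideanSpace ℝ (Fin d) → EuclideanSpace ℝ (Fin d) :=
      fun h => u (x - h) - u x with hv
    have hvnorm : ∀ h, ‖v h‖ ≤ A * ‖h‖ := by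
      intro h
      have h1 := convex_univ.norm_image_sub_le_of_norm_fderiv_le
        (f := u) (fun y (_ : y ∈ (univ : Set (EuclideanSpace ℝ (Fin d)))) => hud y)
        (fun y _ => hA y) (Set.mem_univ x) (Set.mem_univ (x - h))
      have h2 : x - h - x = -h := by abel
      rw [h2, norm_neg] at h1
      exact h1
    have hvcont : Continuous v :=
      (hu.continuous.comp (continuous_const.sub continuous_id)).sub continuous_const
    have hsubder : ∀ h : EuclideanSpace ℝ (Fin d),
        HasFDerivAt (fun y : EuclideanSpace ℝ (Fin d) => x - y)
          (-(ContinuousLinearMap.id ℝ (EuclideanSpace ℝ (Fin d)))) h :=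
      fun h => (hasFDerivAt_id h).const_sub x
    set w' : EuclideanSpace ℝ (Fin d) →
        (EuclideanSpace ℝ (Fin d) →L[ℝ] EuclideanSpace ℝ (Fin d)) :=
      fun h => (fderiv ℝ u (x - h)).comp
        (-(ContinuousLinearMap.id ℝ (EuclideanSpace ℝ (Fin d)))) with hw'
    have hvder : ∀ h, HasFDerivAt v (w' h) h := by
      intro h
      exact ((hud (x - h)).hasFDerivAt.comp h (hsubder h)).sub_const (u x)
    have hdivv : ∀ h, ∑ i, w' h (EuclideanSpace.single i 1) i = 0 := by
      intro h
      have hco : ∀ i : Fin d, fderiv ℝ (fun z => u z i) (x - h)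
          = (EuclideanSpace.proj (𝕜 := ℝ) i).comp (fderiv ℝ u (x - h)) := by
        intro i
        exact ((EuclideanSpace.proj (𝕜 := ℝ) i).hasFDerivAt.comp (x - h)
          (hud (x - h)).hasFDerivAt).fderiv
      have hy := hdiv (x - h)
      simp only [hco, ContinuousLinearMap.comp_apply] at hy
      have heach : ∀ i : Fin d, w' h (EuclideanSpace.single i 1) i
          = -((fderiv ℝ u (x - h)) (EuclideanSpace.single i 1) i) := by
        intro i
        simp only [hw', ContinuousLinearMap.comp_apply, ContinuousLinearMap.neg_apply,
          ContinuousLinearMap.coe_id', id_eq, map_neg]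
        rfl
      rw [Finset.sum_congr rfl fun i _ => heach i, Finset.sum_neg_distrib]
      rw [show (∑ i : Fin d, (fderiv ℝ u (x - h)) (EuclideanSpace.single i 1) i) = 0 from hy]
      exact neg_zero
    -- Integrability of K' applied to v
    have hKvcont : Continuous fun h => fderiv ℝ (⇑K) h (v h) := hK'cont.clm_apply hvcont
    have hintKv : Integrable (fun h => fderiv ℝ (⇑K) h (v h)) := by
      refine Integrable.mono' (hintK1.const_mul A) hKvcont.aestronglyMeasurable ?_
      filter_upwards with h
      calc ‖fderiv ℝ (⇑K) h (v h)‖ ≤ ‖fderiv ℝ (⇑K) h‖ * ‖v h‖ :=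
            ContinuousLinearMap.le_opNorm _ _
      _ ≤ ‖fderiv ℝ (⇑K) h‖ * (A * ‖h‖) :=
            mul_le_mul_of_nonneg_left (hvnorm h) (norm_nonneg _)
      _ = A * (‖h‖ * ‖fderiv ℝ (⇑K) h‖) := by ring
    -- decay bound for |K| * ‖v‖
    have hCv : ∀ h, |K h| * ‖v h‖ ≤ A * B / (1 + ‖h‖)^(d+1) := by
      intro h
      rw [le_div_iff₀ (by positivity)]
      calc |K h| * ‖v h‖ * (1 + ‖h‖)^(d+1)
          ≤ |K h| * (A * ‖h‖) * (1 + ‖h‖)^(d+1) := by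
            have := mul_le_mul_of_nonneg_left (hvnorm h) (abs_nonneg (K h))
            exact mul_le_mul_of_nonneg_right this (by positivity)
      _ = A * (‖h‖ * (1 + ‖h‖)^(d+1) * ‖K h‖) := by
            rw [Real.norm_eq_abs]; ring
      _ ≤ A * ((1 + ‖h‖)^(d+2) * ‖K h‖) := by
            apply mul_le_mul_of_nonneg_left _ hA0
            apply mul_le_mul_of_nonneg_right _ (norm_nonneg _)
            calc ‖h‖ * (1 + ‖h‖)^(d+1) ≤ (1 + ‖h‖) * (1 + ‖h‖)^(d+1) := by
                  apply mul_le_mul_of_nonneg_right (by linarith [norm_nonneg h]) (by positivity)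
            _ = (1 + ‖h‖)^(d+2) := (pow_succ' _ _).symm
      _ ≤ A * B := mul_le_mul_of_nonneg_left (hKdecay h) hA0
    -- First divergence identity : ∫ K' (v) = 0
    have Z1 : ∫ h, fderiv ℝ (⇑K) h (v h) = 0 :=
      div_form_integral_zero d hd (⇑K) v (fun h => fderiv ℝ (⇑K) h) w'
        hKder hvder hKvcont hdivv hintKv (A * B) hCv
    -- Second application with g = F(x-·) * K
    set g : EuclideanSpace ℝ (Fin d) → ℝ := fun h => F (x - h) * K h with hg
    set g' : EuclideanSpace ℝ (Fin d) → (EuclideanSpace ℝ (Fin d) →L[ℝ] ℝ) :=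
      fun h => F (x - h) • fderiv ℝ (⇑K) h
        + K h • ((fderiv ℝ F (x - h)).comp
            (-(ContinuousLinearMap.id ℝ (EuclideanSpace ℝ (Fin d))))) with hg'
    have hgder : ∀ h, HasFDerivAt g (g' h) h := by
      intro h
      exact (((hFd (x - h)).hasFDerivAt.comp h (hsubder h)).mul (hKder h))
    have hg'v : ∀ h, g' h (v h)
        = F (x - h) * fderiv ℝ (⇑K) h (v h) - K h * fderiv ℝ F (x - h) (v h) := by
      intro h
      simp only [hg', ContinuousLinearMap.add_apply, ContinuousLinearMap.smul_apply,
        ContinuousLinearMap.comp_apply, ContinuousLinearMap.neg_apply,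
        ContinuousLinearMap.coe_id', id_eq, map_neg, smul_eq_mul]
      ring
    have hFxcont : Continuous fun h : EuclideanSpace ℝ (Fin d) => F (x - h) :=
      hF.continuous.comp (continuous_const.sub continuous_id)
    have hFvcont : Continuous fun h => fderiv ℝ F (x - h) (v h) :=
      (hF'cont.comp (continuous_const.sub continuous_id)).clm_apply hvcont
    have hint1 : Integrable (fun h => F (x - h) * fderiv ℝ (⇑K) h (v h)) := by
      refine Integrable.mono' ((hintK1.const_mul A).const_mul MF)
        (hFxcont.mul hKvcont).aestronglyMeasurable ?_
      filter_upwards with h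
      rw [norm_mul]
      calc ‖F (x - h)‖ * ‖fderiv ℝ (⇑K) h (v h)‖
          ≤ MF * (‖fderiv ℝ (⇑K) h‖ * ‖v h‖) := by
            apply mul_le_mul (by rw [Real.norm_eq_abs]; exact hMF (x - h))
              (ContinuousLinearMap.le_opNorm _ _) (norm_nonneg _) hMF0
      _ ≤ MF * (‖fderiv ℝ (⇑K) h‖ * (A * ‖h‖)) := by
            apply mul_le_mul_of_nonneg_left
              (mul_le_mul_of_nonneg_left (hvnorm h) (norm_nonneg _)) hMF0
      _ = MF * (A * (‖h‖ * ‖fderiv ℝ (⇑K) h‖)) := by ring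
    have hint2 : Integrable (fun h => K h * fderiv ℝ F (x - h) (v h)) := by
      refine Integrable.mono' ((hintKK1.const_mul A).const_mul MG)
        ((K.continuous.mul hFvcont)).aestronglyMeasurable ?_
      filter_upwards with h
      rw [norm_mul]
      calc ‖K h‖ * ‖fderiv ℝ F (x - h) (v h)‖
          ≤ ‖K h‖ * (MG * (A * ‖h‖)) := by
            apply mul_le_mul_of_nonneg_left _ (norm_nonneg _)
            calc ‖fderiv ℝ F (x - h) (v h)‖ ≤ ‖fderiv ℝ F (x - h)‖ * ‖v h‖ :=
                  ContinuousLinearMap.le_opNorm _ _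
            _ ≤ MG * (A * ‖h‖) :=
                  mul_le_mul (hMG (x - h)) (hvnorm h) (norm_nonneg _)
                    (le_trans (norm_nonneg _) (hMG (x - h)))
      _ = MG * (A * (‖h‖ * ‖K h‖)) := by ring
    have hg'vcont : Continuous fun h => g' h (v h) := by
      have : (fun h => g' h (v h))
          = fun h => F (x - h) * fderiv ℝ (⇑K) h (v h) - K h * fderiv ℝ F (x - h) (v h) :=
        funext hg'v
      rw [this]
      exact (hFxcont.mul hKvcont).sub (K.continuous.mul hFvcont)
    have hintg'v : Integrable (fun h => g' h (v h)) := by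
      have : (fun h => g' h (v h))
          = fun h => F (x - h) * fderiv ℝ (⇑K) h (v h) - K h * fderiv ℝ F (x - h) (v h) :=
        funext hg'v
      rw [this]
      exact hint1.sub hint2
    have hCg : ∀ h, |g h| * ‖v h‖ ≤ MF * (A * B) / (1 + ‖h‖)^(d+1) := by
      intro h
      have h1 : |g h| * ‖v h‖ ≤ MF * (|K h| * ‖v h‖) := by
        rw [hg, abs_mul, mul_assoc]
        exact mul_le_mul_of_nonneg_right (hMF (x - h))
          (mul_nonneg (abs_nonneg _) (norm_nonneg _))
      refine h1.trans ?_
      rw [mul_div_assoc]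
      exact mul_le_mul_of_nonneg_left (hCv h) hMF0
    have Z2 : ∫ h, g' h (v h) = 0 :=
      div_form_integral_zero d hd g v g'
        (fun h => (fderiv ℝ u (x - h)).comp
          (-(ContinuousLinearMap.id ℝ (EuclideanSpace ℝ (Fin d)))))
        hgder hvder hg'vcont hdivv hintg'v (MF * (A * B)) hCg
    have Z2' : ∫ h, (F (x - h) * fderiv ℝ (⇑K) h (v h) - K h * fderiv ℝ F (x - h) (v h)) = 0 := by
      rw [← Z2]
      exact integral_congr_ae (Eventually.of_forall fun h => (hg'v h).symm)
    have Z3 : ∫ h, F (x - h) * fderiv ℝ (⇑K) h (v h)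
        = ∫ h, K h * fderiv ℝ F (x - h) (v h) := by
      have := integral_sub hint1 hint2
      rw [Z2'] at this
      linarith [this]
    refine ⟨?_, Z1, hint1, hintKv⟩
    rw [show (fun h => fderiv ℝ F (x - h) (u (x - h) - u x) * K h)
        = fun h => K h * fderiv ℝ F (x - h) (v h) from funext fun h => mul_comm _ _]
    exact Z3.symm
  constructor
  · -- Hölder bound
    intro x
    obtain ⟨hid, hZ1, hint1, hintKv⟩ := main x
    have hid2 : ∫ h, fderiv ℝ F (x - h) (u (x - h) - u x) * K h
        = ∫ h, (F (x - h) - F x) * fderiv ℝ (⇑K) h (u (x - h) - u x) := by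
      rw [hid]
      have : ∫ h, (F (x - h) - F x) * fderiv ℝ (⇑K) h (u (x - h) - u x)
          = (∫ h, F (x - h) * fderiv ℝ (⇑K) h (u (x - h) - u x))
            - ∫ h, F x * fderiv ℝ (⇑K) h (u (x - h) - u x) := by
        rw [← integral_sub hint1 (hintKv.const_mul (F x))]
        congr 1
        funext h
        ring
      rw [this, integral_const_mul, hZ1, mul_zero, sub_zero]
    rw [hid2, ← Real.norm_eq_abs]
    refine (norm_integral_le_integral_norm _).trans ?_
    rw [show A * Hα * ∫ h, ‖h‖ ^ (1 + α) * ‖fderiv ℝ (⇑K) h‖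
        = ∫ h, A * Hα * (‖h‖ ^ (1 + α) * ‖fderiv ℝ (⇑K) h‖) from (integral_const_mul _ _).symm]
    refine integral_mono_of_nonneg (Eventually.of_forall fun h => norm_nonneg _)
      ((hrint.const_mul _)) (Eventually.of_forall fun h => ?_)
    have hvn : ‖u (x - h) - u x‖ ≤ A * ‖h‖ := by
      have h1 := convex_univ.norm_image_sub_le_of_norm_fderiv_le
        (f := u) (fun y (_ : y ∈ (univ : Set (EuclideanSpace ℝ (Fin d)))) => hud y)
        (fun y _ => hA y) (Set.mem_univ x) (Set.mem_univ (x - h))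
      have h2 : x - h - x = -h := by abel
      rwa [h2, norm_neg] at h1
    have hFh : |F (x - h) - F x| ≤ Hα * ‖h‖ ^ α := by
      have h1 := hHα (x - h) x
      have h2 : x - h - x = -h := by abel
      rwa [h2, norm_neg] at h1
    have hHα0 : (0:ℝ) ≤ Hα * ‖h‖ ^ α := le_trans (abs_nonneg _) hFh
    simp only [norm_mul, Real.norm_eq_abs]
    calc |F (x - h) - F x| * ‖fderiv ℝ (⇑K) h (u (x - h) - u x)‖
        ≤ (Hα * ‖h‖ ^ α) * (‖fderiv ℝ (⇑K) h‖ * (A * ‖h‖)) := by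
          apply mul_le_mul hFh _ (norm_nonneg _) hHα0
          calc ‖fderiv ℝ (⇑K) h (u (x - h) - u x)‖
              ≤ ‖fderiv ℝ (⇑K) h‖ * ‖u (x - h) - u x‖ := ContinuousLinearMap.le_opNorm _ _
          _ ≤ ‖fderiv ℝ (⇑K) h‖ * (A * ‖h‖) :=
              mul_le_mul_of_nonneg_left hvn (norm_nonneg _)
    _ = A * Hα * ((‖h‖ * ‖h‖ ^ α) * ‖fderiv ℝ (⇑K) h‖) := by ring
    _ = A * Hα * (‖h‖ ^ (1 + α) * ‖fderiv ℝ (⇑K) h‖) := by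
          congr 2
          rcases eq_or_lt_of_le (norm_nonneg h) with h0 | h0
          · rw [← h0, Real.zero_rpow (by linarith), Real.zero_rpow (by positivity), mul_zero]
          · rw [Real.rpow_add h0, Real.rpow_one]
  · -- sup bound
    intro x
    obtain ⟨hid, hZ1, hint1, hintKv⟩ := main x
    rw [hid, ← Real.norm_eq_abs]
    refine (norm_integral_le_integral_norm _).trans ?_
    rw [show A * MF * ∫ h, ‖h‖ * ‖fderiv ℝ (⇑K) h‖
        = ∫ h, A * MF * (‖h‖ * ‖fderiv ℝ (⇑K) h‖) from (integral_const_mul _ _).symm]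
    refine integral_mono_of_nonneg (Eventually.of_forall fun h => norm_nonneg _)
      ((hintK1.const_mul _)) (Eventually.of_forall fun h => ?_)
    have hvn : ‖u (x - h) - u x‖ ≤ A * ‖h‖ := by
      have h1 := convex_univ.norm_image_sub_le_of_norm_fderiv_le
        (f := u) (fun y (_ : y ∈ (univ : Set (EuclideanSpace ℝ (Fin d)))) => hud y)
        (fun y _ => hA y) (Set.mem_univ x) (Set.mem_univ (x - h))
      have h2 : x - h - x = -h := by abel
      rwa [h2, norm_neg] at h1
    simp only [norm_mul, Real.norm_eq_abs]
    calc |F (x - h)| * ‖fderiv ℝ (⇑K) h (u (x - h) - u x)‖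
        ≤ MF * (‖fderiv ℝ (⇑K) h‖ * (A * ‖h‖)) := by
          apply mul_le_mul (hMF (x - h)) _ (norm_nonneg _) hMF0
          calc ‖fderiv ℝ (⇑K) h (u (x - h) - u x)‖
              ≤ ‖fderiv ℝ (⇑K) h‖ * ‖u (x - h) - u x‖ := ContinuousLinearMap.le_opNorm _ _
          _ ≤ ‖fderiv ℝ (⇑K) h‖ * (A * ‖h‖) :=
              mul_le_mul_of_nonneg_left hvn (norm_nonneg _)
    _ = A * MF * (‖h‖ * ‖fderiv ℝ (⇑K) h‖) := by ring
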